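/- Let a > 0, b > 0, Te ∈ ℝ, β > 0, C > 0, and t1 < t2. Suppose P(t) = 1/(β + C e^{bt}) − 1 for t ∈ [t1,t2], and suppose T : [t1,t2] → ℝ is differentiable with T'(t) = a·P(t) − b·(T(t) − Te) on [t1,t2]. Then for every t ∈ [t1,t2]: T(t) = (a/(bC))·e^{-bt}·ln( (β + C e^{bt}) / (β + C e^{b t1}) ) + (T(t1) − Te + a/b)·e^{-b(t - t1)} + Te − a/b. -/

import Mathlib

open MeasureTheory Real Set

theorem stmt_15 (a b Te β C t1 t2 : ℝ) (ha : 0 < a) (hb : 0 < b)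
    (hβ : 0 < β) (hC : 0 < C) (h12 : t1 < t2)
    (P T : ℝ → ℝ)
    (hP : ∀ t ∈ Set.Icc t1 t2, P t = 1 / (β + C * Real.exp (b * t)) - 1)
    (hT : ∀ t ∈ Set.Icc t1 t2, HasDerivAt T (a * P t - b * (T t - Te)) t) :
    ∀ t ∈ Set.Icc t1 t2,
      T t = (a / (b * C)) * Real.exp (-b * t) *
          Real.log ((β + C * Real.exp (b * t)) / (β + C * Real.exp (b * t1))) +
        (T t1 - Te + a / b) * Real.exp (-b * (t - t1)) + Te - a / b := by
  set G : ℝ → ℝ := fun t =>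
    Real.exp (b * t) * (T t - Te + a / b) - (a / (b * C)) * Real.log (β + C * Real.exp (b * t))
    with hG
  have hpos : ∀ t : ℝ, 0 < β + C * Real.exp (b * t) := fun t => by positivity
  have hGderiv : ∀ t ∈ Set.Icc t1 t2, HasDerivAt G 0 t := by
    intro t ht
    have he : HasDerivAt (fun t => Real.exp (b * t)) (Real.exp (b * t) * b) t := by
      simpa using ((hasDerivAt_id t).const_mul b).exp
    have h1 : HasDerivAt (fun t => Real.exp (b * t) * (T t - Te + a / b))
        (Real.exp (b * t) * b * (T t - Te + a / b) +
          Real.exp (b * t) * (a * P t - b * (T t - Te))) t :=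
      he.mul (((hT t ht).sub_const Te).add_const (a / b))
    have h2 : HasDerivAt (fun t => Real.log (β + C * Real.exp (b * t)))
        ((C * (Real.exp (b * t) * b)) / (β + C * Real.exp (b * t))) t := by
      have := ((he.const_mul C).const_add β).log (ne_of_gt (hpos t))
      simpa using this
    have h3 := h1.sub (h2.const_mul (a / (b * C)))
    have key : Real.exp (b * t) * b * (T t - Te + a / b) +
          Real.exp (b * t) * (a * P t - b * (T t - Te)) -
          (a / (b * C)) * ((C * (Real.exp (b * t) * b)) / (β + C * Real.exp (b * t))) = 0 := by
      rw [hP t ht]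
      have h0 := (hpos t).ne'
      field_simp
      ring
    rw [key] at h3
    exact h3
  have hconst : ∀ t ∈ Set.Icc t1 t2, G t = G t1 := by
    intro t ht
    apply constant_of_derivWithin_zero (f := G) (a := t1) (b := t2)
    · intro x hx
      exact ((hGderiv x hx).differentiableAt).differentiableWithinAt
    · intro x hx
      have hx' : x ∈ Set.Icc t1 t2 := Ico_subset_Icc_self hx
      exact ((hGderiv x hx').hasDerivWithinAt).derivWithin (uniqueDiffOn_Icc h12 x hx')
    · exact ht
  intro t ht
  have h := hconst t ht
  simp only [hG] at h
  have hexp : Real.exp (b * t) ≠ 0 := (Real.exp_pos _).ne'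
  have hlog : Real.log ((β + C * Real.exp (b * t)) / (β + C * Real.exp (b * t1))) =
      Real.log (β + C * Real.exp (b * t)) - Real.log (β + C * Real.exp (b * t1)) :=
    Real.log_div (hpos t).ne' (hpos t1).ne'
  rw [hlog]
  have h1 : Real.exp (-b * t) = 1 / Real.exp (b * t) := by
    rw [show -b * t = -(b * t) by ring, Real.exp_neg, one_div]
  have h2 : Real.exp (-b * (t - t1)) = Real.exp (b * t1) / Real.exp (b * t) := by
    rw [← Real.exp_sub]; ring_nf
  rw [h1, h2]
  field_simp at h ⊢
  linear_combination h
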